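/- Let T>0, H∈(0,1), p≥1 and m∈ℕ, m≥1. Then there exists a constant C>0, depending only on T, m, H and p, such that for every real a≥0: (∫₀^T e^{−a v^{2H}} dv)^p ≤ C·∫₀^{T/m} e^{−a v^{2H/p}} dv. -/

import Mathlib

open MeasureTheory Nat

noncomputable section

private lemma contExp (a q : ℝ) (hq : 0 ≤ q) :
    Continuous fun v : ℝ => Real.exp (-a * v ^ q) :=
  Real.continuous_exp.comp (continuous_const.mul (Real.continuous_rpow_const hq))

private lemma aux_upper (T H : ℝ) (hT : 0 < T) (hH : 0 < H) (a b : ℝ) (ha : 0 < a)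
    (hb : 0 < b) (hab : b ^ (2*H) = a⁻¹) (n : ℕ) (hn : (2:ℝ) ≤ 2*H*n) :
    ∫ v in (0:ℝ)..T, Real.exp (-a * v ^ (2*H)) ≤ (1 + (n ! : ℝ)) * min T b := by
  have h2H : (0:ℝ) ≤ 2*H := by linarith
  have hcont : Continuous fun v : ℝ => Real.exp (-a * v ^ (2*H)) := contExp a _ h2H
  have hint : ∀ x y : ℝ, IntervalIntegrable (fun v => Real.exp (-a * v ^ (2*H))) volume x y :=
    fun x y => hcont.intervalIntegrable x y
  have hle1 : ∀ v : ℝ, 0 ≤ v → Real.exp (-a * v ^ (2*H)) ≤ 1 := by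
    intro v hv
    apply Real.exp_le_one_iff.mpr
    rw [neg_mul, neg_nonpos]
    exact mul_nonneg ha.le (Real.rpow_nonneg hv _)
  have hfac : (0:ℝ) ≤ (n ! : ℝ) := by positivity
  have hconst : ∀ x y : ℝ, 0 ≤ x → x ≤ y →
      ∫ v in x..y, Real.exp (-a * v ^ (2*H)) ≤ y - x := by
    intro x y hx hxy
    calc ∫ v in x..y, Real.exp (-a * v ^ (2*H)) ≤ ∫ _ in x..y, (1:ℝ) := by
          apply intervalIntegral.integral_mono_on hxy (hint x y) intervalIntegrable_const
          intro v hv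
          exact hle1 v (hx.trans hv.1)
      _ = y - x := by simp
  rcases le_total T b with h | h
  · rw [min_eq_left h]
    calc ∫ v in (0:ℝ)..T, Real.exp (-a * v ^ (2*H)) ≤ T - 0 := hconst 0 T le_rfl hT.le
      _ = 1 * T := by ring
      _ ≤ (1 + (n ! : ℝ)) * T := by
          apply mul_le_mul_of_nonneg_right _ hT.le
          linarith
  · rw [min_eq_right h]
    -- pointwise bound on [b, T]
    have key : ∀ t : ℝ, b ≤ t → Real.exp (-a * t ^ (2*H)) ≤ (n ! : ℝ) * b ^ 2 * t ^ (-2 : ℤ) := by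
      intro t hbt
      have ht : 0 < t := hb.trans_le hbt
      have hx : 0 < a * t ^ (2*H) := mul_pos ha (Real.rpow_pos_of_pos ht _)
      set x := a * t ^ (2*H) with hxdef
      have h1 : Real.exp (-a * t ^ (2*H)) ≤ (n ! : ℝ) / x ^ n := by
        rw [neg_mul, ← hxdef, Real.exp_neg]
        have h2 := Real.pow_div_factorial_le_exp x hx.le n
        have h3 : 0 < x ^ n / (n ! : ℝ) := div_pos (pow_pos hx n) (by positivity)
        calc (Real.exp x)⁻¹ ≤ (x ^ n / (n ! : ℝ))⁻¹ := by
              apply inv_anti₀ h3 h2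
          _ = (n ! : ℝ) / x ^ n := by rw [inv_div]
      refine h1.trans ?_
      set r := b / t with hrdef
      have hr0 : 0 < r := div_pos hb ht
      have hr1 : r ≤ 1 := div_le_one_of_le₀ hbt ht.le
      have hr2H : r ^ (2*H) = x⁻¹ := by
        rw [hrdef, Real.div_rpow hb.le ht.le, hab, hxdef, mul_inv, div_eq_mul_inv]
      have hxn : x ^ n = (r ^ (2*H*(n:ℝ)))⁻¹ := by
        rw [Real.rpow_mul hr0.le, Real.rpow_natCast, hr2H, inv_pow, inv_inv]
      have hmono : r ^ (2*H*(n:ℝ)) ≤ r ^ (2:ℝ) :=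
        Real.rpow_le_rpow_of_exponent_ge hr0 hr1 hn
      have hr2 : r ^ (2:ℝ) = b ^ 2 * t ^ (-2:ℤ) := by
        have ht2 : t ^ (-2:ℤ) = (t ^ 2)⁻¹ := by
          rw [zpow_neg]; norm_cast
        rw [Real.rpow_two, hrdef, div_pow, ht2, div_eq_mul_inv]
      calc (n ! : ℝ) / x ^ n = (n ! : ℝ) * r ^ (2*H*(n:ℝ)) := by
            rw [hxn, div_eq_mul_inv, inv_inv]
        _ ≤ (n ! : ℝ) * r ^ (2:ℝ) := mul_le_mul_of_nonneg_left hmono hfac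
        _ = (n ! : ℝ) * b ^ 2 * t ^ (-2:ℤ) := by rw [hr2, mul_assoc]
    have hg : IntervalIntegrable (fun t : ℝ => (n ! : ℝ) * b ^ 2 * t ^ (-2:ℤ)) volume b T := by
      apply ContinuousOn.intervalIntegrable
      apply ContinuousOn.mul continuousOn_const
      intro t ht
      rw [Set.uIcc_of_le h] at ht
      exact (continuousAt_zpow₀ t (-2) (Or.inl (hb.trans_le ht.1).ne')).continuousWithinAt
    have h2 : ∫ v in b..T, Real.exp (-a * v ^ (2*H)) ≤ (n ! : ℝ) * b := by
      calc ∫ v in b..T, Real.exp (-a * v ^ (2*H))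
          ≤ ∫ t in b..T, (n ! : ℝ) * b ^ 2 * t ^ (-2:ℤ) := by
            apply intervalIntegral.integral_mono_on h (hint b T) hg
            intro t ht
            exact key t ht.1
        _ = (n ! : ℝ) * b ^ 2 * ∫ t in b..T, t ^ (-2:ℤ) := by
            rw [intervalIntegral.integral_const_mul]
        _ = (n ! : ℝ) * b ^ 2 * ((T ^ (-1:ℤ) - b ^ (-1:ℤ)) / (-1)) := by
            rw [integral_zpow]
            · norm_num
            · refine Or.inr ⟨by norm_num, ?_⟩
              rw [Set.uIcc_of_le h]
              intro hmem
              exact absurd hmem.1 (by linarith)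
        _ = (n ! : ℝ) * b ^ 2 * (b⁻¹ - T⁻¹) := by
            rw [zpow_neg_one, zpow_neg_one]; ring
        _ ≤ (n ! : ℝ) * b ^ 2 * b⁻¹ := by
            apply mul_le_mul_of_nonneg_left _ (by positivity)
            have : 0 < T⁻¹ := inv_pos.mpr hT
            linarith
        _ = (n ! : ℝ) * b := by field_simp
    have hsplit : ∫ v in (0:ℝ)..T, Real.exp (-a * v ^ (2*H)) =
        (∫ v in (0:ℝ)..b, Real.exp (-a * v ^ (2*H)))
          + ∫ v in b..T, Real.exp (-a * v ^ (2*H)) :=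
      (intervalIntegral.integral_add_adjacent_intervals (hint 0 b) (hint b T)).symm
    have h1 : ∫ v in (0:ℝ)..b, Real.exp (-a * v ^ (2*H)) ≤ b := by
      have := hconst 0 b le_rfl hb.le
      linarith
    rw [hsplit]
    calc (∫ v in (0:ℝ)..b, Real.exp (-a * v ^ (2*H)))
          + ∫ v in b..T, Real.exp (-a * v ^ (2*H)) ≤ b + (n ! : ℝ) * b := add_le_add h1 h2
      _ = (1 + (n ! : ℝ)) * b := by ring

private lemma aux_lower (S q a c : ℝ) (hS : 0 < S) (hq : 0 ≤ q) (ha : 0 ≤ a) (hc : 0 < c)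
    (hac : a * c ^ q ≤ 1) :
    Real.exp (-1) * min S c ≤ ∫ v in (0:ℝ)..S, Real.exp (-a * v ^ q) := by
  set r := min S c with hrdef
  have hr0 : 0 < r := lt_min hS hc
  have hcont := contExp a q hq
  have step1 : Real.exp (-1) * r ≤ ∫ v in (0:ℝ)..r, Real.exp (-a * v ^ q) := by
    have h : ∫ _ in (0:ℝ)..r, Real.exp (-1) ≤ ∫ v in (0:ℝ)..r, Real.exp (-a * v ^ q) := by
      apply intervalIntegral.integral_mono_on hr0.le intervalIntegrable_const
        (hcont.intervalIntegrable _ _)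
      intro v hv
      apply Real.exp_le_exp.mpr
      rw [neg_mul]
      apply neg_le_neg
      have hvq : v ^ q ≤ c ^ q :=
        Real.rpow_le_rpow hv.1 (hv.2.trans (min_le_right _ _)) hq
      calc a * v ^ q ≤ a * c ^ q := mul_le_mul_of_nonneg_left hvq ha
        _ ≤ 1 := hac
    simpa [mul_comm] using h
  refine step1.trans ?_
  apply intervalIntegral.integral_mono_interval le_rfl hr0.le (min_le_left _ _)
  · filter_upwards with v using (Real.exp_pos _).le
  · exact hcont.intervalIntegrable _ _

theorem stmt9
    (T : ℝ) (hT : 0 < T) (H : ℝ) (hH : H ∈ Set.Ioo (0 : ℝ) 1)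
    (p : ℝ) (hp : 1 ≤ p) (m : ℕ) (hm : 1 ≤ m) :
    ∃ C : ℝ, 0 < C ∧
      ∀ a : ℝ, 0 ≤ a →
        (∫ v in (0 : ℝ)..T, Real.exp (-a * v ^ (2 * H))) ^ p
          ≤ C * ∫ v in (0 : ℝ)..(T / m), Real.exp (-a * v ^ (2 * H / p)) := by
  obtain ⟨hH0, hH1⟩ := hH
  have hp0 : (0:ℝ) < p := lt_of_lt_of_le one_pos hp
  set n := ⌈H⁻¹⌉₊ with hn
  have hm0 : (0:ℝ) < (m:ℝ) := by exact_mod_cast Nat.lt_of_lt_of_le Nat.zero_lt_one hm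
  set S := T / (m:ℝ) with hSdef
  have hS0 : 0 < S := div_pos hT hm0
  set K := (1 + (n ! : ℝ)) with hKdef
  have hK1 : (1:ℝ) ≤ K := by
    rw [hKdef]
    have : (0:ℝ) ≤ (n ! : ℝ) := by positivity
    linarith
  have hK0 : (0:ℝ) < K := lt_of_lt_of_le one_pos hK1
  have hKp1 : (1:ℝ) ≤ K ^ p := Real.one_le_rpow hK1 hp0.le
  have hKp0 : (0:ℝ) < K ^ p := lt_of_lt_of_le one_pos hKp1
  have hmax0 : (0:ℝ) < max 1 (T ^ p / S) := lt_of_lt_of_le one_pos (le_max_left _ _)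
  set C := Real.exp 1 * (K ^ p * max 1 (T ^ p / S)) with hCdef
  have hC0 : 0 < C := by
    rw [hCdef]; positivity
  refine ⟨C, hC0, ?_⟩
  intro a ha
  have hC1 : max 1 (T ^ p / S) ≤ C := by
    rw [hCdef]
    have he1 : (1:ℝ) ≤ Real.exp 1 := Real.one_le_exp (by norm_num)
    have h2 : max 1 (T ^ p / S) ≤ K ^ p * max 1 (T ^ p / S) :=
      le_mul_of_one_le_left hmax0.le hKp1
    have h3 : K ^ p * max 1 (T ^ p / S) ≤ Real.exp 1 * (K ^ p * max 1 (T ^ p / S)) :=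
      le_mul_of_one_le_left (by positivity) he1
    exact h2.trans h3
  rcases ha.eq_or_lt with rfl | ha0
  · -- a = 0
    have e1 : (∫ v in (0:ℝ)..T, Real.exp (-(0:ℝ) * v ^ (2 * H))) = T := by
      simp
    have e2 : (∫ v in (0:ℝ)..S, Real.exp (-(0:ℝ) * v ^ (2 * H / p))) = S := by
      simp
    rw [e1, e2]
    calc T ^ p = (T ^ p / S) * S := by field_simp
      _ ≤ max 1 (T ^ p / S) * S := mul_le_mul_of_nonneg_right (le_max_right _ _) hS0.le
      _ ≤ C * S := mul_le_mul_of_nonneg_right hC1 hS0.le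
  · -- a > 0
    set b := a ^ (-(2*H)⁻¹ : ℝ) with hbdef
    have hb0 : 0 < b := Real.rpow_pos_of_pos ha0 _
    have hab : b ^ (2*H) = a⁻¹ := by
      rw [hbdef, ← Real.rpow_mul ha]
      rw [show (-(2*H)⁻¹ * (2*H) : ℝ) = -1 by field_simp]
      rw [Real.rpow_neg_one]
    have hn2 : (2:ℝ) ≤ 2*H*n := by
      have h1 : H⁻¹ ≤ (n:ℝ) := Nat.le_ceil _
      have h2 : H * H⁻¹ ≤ H * n := mul_le_mul_of_nonneg_left h1 hH0.le
      rw [mul_inv_cancel₀ hH0.ne'] at h2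
      nlinarith
    have hup := aux_upper T H hT hH0 a b ha0 hb0 hab n hn2
    have hbp0 : 0 < b ^ p := Real.rpow_pos_of_pos hb0 _
    have hcq : a * (b ^ p) ^ (2*H/p) ≤ 1 := by
      have h : (b ^ p) ^ (2*H/p) = b ^ (2*H) := by
        rw [← Real.rpow_mul hb0.le]
        congr 1
        field_simp
      rw [h, hab, mul_inv_cancel₀ ha0.ne']
    have hq0 : (0:ℝ) ≤ 2*H/p := by positivity
    have hlow := aux_lower S (2*H/p) a (b ^ p) hS0 hq0 ha hbp0 hcq
    have hI0 : 0 ≤ ∫ v in (0:ℝ)..T, Real.exp (-a * v ^ (2*H)) :=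
      intervalIntegral.integral_nonneg hT.le (fun v _ => (Real.exp_pos _).le)
    have hminp : (min T b) ^ p = min (T ^ p) (b ^ p) := by
      rcases le_total T b with h | h
      · rw [min_eq_left h, min_eq_left (Real.rpow_le_rpow hT.le h hp0.le)]
      · rw [min_eq_right h, min_eq_right (Real.rpow_le_rpow hb0.le h hp0.le)]
    have step1 : (∫ v in (0:ℝ)..T, Real.exp (-a * v ^ (2*H))) ^ p
        ≤ K ^ p * min (T ^ p) (b ^ p) := by
      calc (∫ v in (0:ℝ)..T, Real.exp (-a * v ^ (2*H))) ^ p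
          ≤ (K * min T b) ^ p := Real.rpow_le_rpow hI0 hup hp0.le
        _ = K ^ p * (min T b) ^ p := Real.mul_rpow hK0.le (le_min hT.le hb0.le)
        _ = K ^ p * min (T ^ p) (b ^ p) := by rw [hminp]
    have step2 : min (T ^ p) (b ^ p) ≤ max 1 (T ^ p / S) * min S (b ^ p) := by
      rcases le_total (b ^ p) S with h | h
      · rw [min_eq_right h]
        calc min (T ^ p) (b ^ p) ≤ b ^ p := min_le_right _ _
          _ = 1 * b ^ p := (one_mul _).symm
          _ ≤ max 1 (T ^ p / S) * b ^ p :=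
              mul_le_mul_of_nonneg_right (le_max_left _ _) hbp0.le
      · rw [min_eq_left h]
        calc min (T ^ p) (b ^ p) ≤ T ^ p := min_le_left _ _
          _ = (T ^ p / S) * S := by field_simp
          _ ≤ max 1 (T ^ p / S) * S := mul_le_mul_of_nonneg_right (le_max_right _ _) hS0.le
    have step3 : min S (b ^ p)
        ≤ Real.exp 1 * ∫ v in (0:ℝ)..S, Real.exp (-a * v ^ (2*H/p)) := by
      have he : Real.exp 1 * Real.exp (-1) = 1 := by
        rw [← Real.exp_add]; norm_num
      calc min S (b ^ p) = Real.exp 1 * (Real.exp (-1) * min S (b ^ p)) := by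
            rw [← mul_assoc, he, one_mul]
        _ ≤ Real.exp 1 * ∫ v in (0:ℝ)..S, Real.exp (-a * v ^ (2*H/p)) :=
            mul_le_mul_of_nonneg_left hlow (Real.exp_pos 1).le
    calc (∫ v in (0:ℝ)..T, Real.exp (-a * v ^ (2*H))) ^ p
        ≤ K ^ p * min (T ^ p) (b ^ p) := step1
      _ ≤ K ^ p * (max 1 (T ^ p / S) * min S (b ^ p)) :=
          mul_le_mul_of_nonneg_left step2 hKp0.le
      _ ≤ K ^ p * (max 1 (T ^ p / S)
            * (Real.exp 1 * ∫ v in (0:ℝ)..S, Real.exp (-a * v ^ (2*H/p)))) :=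
          mul_le_mul_of_nonneg_left (mul_le_mul_of_nonneg_left step3 hmax0.le) hKp0.le
      _ = C * ∫ v in (0:ℝ)..S, Real.exp (-a * v ^ (2*H/p)) := by
          rw [hCdef]; ring

end
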